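/- Let X and Y be real Banach spaces, Θ : X × Y → L(X × Y, ℝ) a C¹ map into continuous linear functionals (a one-form), and H : X × Y → ℝ a C¹ function. For C¹ paths γ : [t₁,t₂] → X × Y define the action A(γ) := ∫_{t₁}^{t₂} ( Θ(γ(t))[γ'(t)] − H(γ(t)) ) dt. Say γ is a critical point of A if for every C¹ family Γ : (−1,1) × [t₁,t₂] → X × Y with Γ(0,·) = γ and Γ(ε, t₁) = γ(t₁), Γ(ε, t₂) = γ(t₂) for all ε, the function ε ↦ A(Γ(ε,·)) has vanishing derivative at ε = 0. Let y* : X → Y be C¹ and suppose γ(t) = (x(t), y*(x(t))) for a C¹ path x : [t₁,t₂] → X, and that γ is a critical point of A. Then x is a critical point (in the same fixed-endpoint sense) of the slow action A_slow(x) := ∫_{t₁}^{t₂} ( Θ_slow(x(t))[x'(t)] − H_slow(x(t)) ) dt, where Θ_slow(x)[δx] := Θ(x, y*(x))[(δx, Dy*(x)[δx])] and H_slow(x) := H(x, y*(x)). -/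

import Mathlib

/-!
Statement 15: Inheritance of variational structure under slow-manifold restriction.
If a path lying in the graph of `y*` is a fixed-endpoint critical point of the phase-space
action `A(γ) = ∫ (Θ(γ)[γ'] − H(γ)) dt`, then its `X`-component is a critical point of the
slow action with `Θ_slow(x)[δx] = Θ(x,y*(x))[(δx, Dy*(x)[δx])]` and
`H_slow(x) = H(x,y*(x))`.
-/

noncomputable section

/-- Fixed-endpoint criticality of a path `γ` for the action with integrand
`lag (γ t) (γ' t)`: for every `C¹` family of paths `Γ` with `Γ 0 = γ` and fixed endpoints,
the derivative of `ε ↦ ∫_{t₁}^{t₂} lag (Γ ε t) ((Γ ε)' t) dt` vanishes at `ε = 0`. -/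
def ActionCritical {E : Type*} [NormedAddCommGroup E] [NormedSpace ℝ E]
    (lag : E → E → ℝ) (t₁ t₂ : ℝ) (γ : ℝ → E) : Prop :=
  ∀ Γ : ℝ → ℝ → E, ContDiff ℝ 1 (Function.uncurry Γ) →
    (∀ t, Γ 0 t = γ t) → (∀ ε, Γ ε t₁ = γ t₁) → (∀ ε, Γ ε t₂ = γ t₂) →
    deriv (fun ε => ∫ t in t₁..t₂, lag (Γ ε t) (deriv (Γ ε) t)) 0 = 0

theorem slow_manifold_inherits_variational_structure
    {X Y : Type*} [NormedAddCommGroup X] [NormedSpace ℝ X]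
    [NormedAddCommGroup Y] [NormedSpace ℝ Y]
    (Θ : X × Y → (X × Y) →L[ℝ] ℝ) (hΘ : ContDiff ℝ 1 Θ)
    (H : X × Y → ℝ) (hH : ContDiff ℝ 1 H)
    (ystar : X → Y) (hystar : ContDiff ℝ 1 ystar)
    (t₁ t₂ : ℝ)
    (x : ℝ → X) (hx : ContDiff ℝ 1 x)
    (hcrit : ActionCritical (fun z v => Θ z v - H z) t₁ t₂
      (fun t => (x t, ystar (x t)))) :
    ActionCritical
      (fun ξ v => Θ (ξ, ystar ξ) (v, fderiv ℝ ystar ξ v) - H (ξ, ystar ξ))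
      t₁ t₂ x := by
  intro Γ hΓ h0 h1 h2
  set Γh : ℝ → ℝ → X × Y := fun ε t => (Γ ε t, ystar (Γ ε t)) with hΓhdef
  have hΓε : ∀ ε : ℝ, ContDiff ℝ 1 (Γ ε) := fun ε =>
    hΓ.comp (contDiff_const.prodMk contDiff_id)
  have key : ∀ ε t, deriv (Γh ε) t
      = (deriv (Γ ε) t, fderiv ℝ ystar (Γ ε t) (deriv (Γ ε) t)) := by
    intro ε t
    have hd : HasDerivAt (Γ ε) (deriv (Γ ε) t) t :=
      ((hΓε ε).differentiable one_ne_zero t).hasDerivAt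
    have hy : HasDerivAt (fun s => ystar (Γ ε s))
        (fderiv ℝ ystar (Γ ε t) (deriv (Γ ε) t)) t :=
      ((hystar.differentiable one_ne_zero (Γ ε t)).hasFDerivAt).comp_hasDerivAt t hd
    exact (hd.prodMk hy).deriv
  have goal_eq : (fun ε => ∫ t in t₁..t₂,
        (Θ (Γ ε t, ystar (Γ ε t)) (deriv (Γ ε) t, fderiv ℝ ystar (Γ ε t) (deriv (Γ ε) t))
          - H (Γ ε t, ystar (Γ ε t))))
      = fun ε => ∫ t in t₁..t₂, (Θ (Γh ε t) (deriv (Γh ε) t) - H (Γh ε t)) := by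
    funext ε
    refine intervalIntegral.integral_congr fun t _ => ?_
    rw [key]
  rw [goal_eq]
  refine hcrit Γh (hΓ.prodMk (hystar.comp hΓ)) ?_ ?_ ?_
  · intro t; simp [Γh, h0]
  · intro ε; simp [Γh, h1]
  · intro ε; simp [Γh, h2]
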